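/- (Parity Lemma) In an edge-to-edge tiling of the sphere by congruent a⁴b-pentagons, at every vertex the total number of angles from {δ, ε} is even. -/

import Mathlib

/-- (Parity Lemma) Around a vertex of degree `n` in an edge-to-edge tiling by `a⁴b`-pentagons,
the `i`-th tile has two edges at the vertex, a left edge `l i` and a right edge `r i`
(`true` = a `b`-edge, `false` = an `a`-edge); edge-to-edge matching means `r i = l (i+1)`
cyclically.  The angle of tile `i` is a `δ`/`ε`-angle exactly when one of its two flanking
edges is the `b`-edge, i.e. when `l i ≠ r i` (the pentagon has no angle between two
`b`-edges, so never `l i = r i = true`).  Then the total number of angles from `{δ, ε}`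
at the vertex is even. -/
theorem stmt4 (n : ℕ) [NeZero n] (l r : ZMod n → Bool)
    (hmatch : ∀ i, r i = l (i + 1))
    (hnobb : ∀ i, ¬(l i = true ∧ r i = true)) :
    Even (Finset.univ.filter (fun i : ZMod n => l i ≠ r i)).card := by
  rw [← ZMod.natCast_eq_zero_iff_even, Finset.card_filter, Nat.cast_sum]
  have key : ∀ i : ZMod n,
      ((if l i ≠ r i then 1 else 0 : ℕ) : ZMod 2)
        = (if l i then 1 else 0) + (if r i then 1 else 0) := by
    intro i
    cases h1 : l i <;> cases h2 : r i <;> simp <;> decide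
  rw [Finset.sum_congr rfl (fun i _ => key i), Finset.sum_add_distrib]
  have : (∑ i : ZMod n, (if r i then (1 : ZMod 2) else 0))
      = ∑ i : ZMod n, (if l i then (1 : ZMod 2) else 0) := by
    simp_rw [hmatch]
    exact Fintype.sum_equiv (Equiv.addRight 1) _ _ (fun i => rfl)
  rw [this, ← two_mul]
  exact mul_eq_zero_of_left (by decide) _
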